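/- For a query vector Q ∈ (Z/B)^N constructed from V ∈ (Z/B)^{N−1} and demand d by setting Q_d = b − Σ_n V_n and Q_n = V_{σ(n)} elsewhere, the answer A_b = Σ_{n=0}^{N−1} W_{n, Q_n} (with the convention W_{n,0} = 0) satisfies: A_{(V̄)} = Σ_{n ≠ d} W_{n, V_n'} (where V̄ = Σ_n V_n and V_n' is the corresponding entry), and for any b' ∈ [1:B−1], A_{(b' + V̄ mod B)} − A_{(V̄)} = W_{d, b'}. -/
import Mathlib


/-- Decoding correctness.  With packets W n j (and W n 0 = 0) in
an abelian group, and the answer A b = Σ_j W j ((insertNth d (b − ΣV) V) j),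
we have A(ΣV) = Σ_{i} W (succAbove d i) (V i) (interference only), and for any
b', A(b' + ΣV) − A(ΣV) = W d b'. -/
theorem stmt_10 (B n : ℕ) [NeZero B] {A : Type*} [AddCommGroup A]
    (W : Fin (n + 1) → ZMod B → A) (hW0 : ∀ m, W m 0 = 0)
    (V : Fin n → ZMod B) (d : Fin (n + 1)) :
    ((∑ j, W j ((Fin.insertNth d ((∑ i, V i) - ∑ i, V i) V : Fin (n + 1) → ZMod B) j))
        = ∑ i, W (d.succAbove i) (V i))
    ∧ ∀ b' : ZMod B,
        (∑ j, W j ((Fin.insertNth d ((b' + ∑ i, V i) - ∑ i, V i) V : Fin (n + 1) → ZMod B) j))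
          - (∑ j, W j ((Fin.insertNth d ((∑ i, V i) - ∑ i, V i) V : Fin (n + 1) → ZMod B) j))
        = W d b' := by
  have key : ∀ x : ZMod B,
      (∑ j, W j ((Fin.insertNth d x V : Fin (n + 1) → ZMod B) j))
        = W d x + ∑ i, W (d.succAbove i) (V i) := by
    intro x
    rw [Fin.sum_univ_succAbove _ d]
    simp
  constructor
  · simp [key, hW0]
  · intro b'
    simp [key, hW0]
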